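/- Let i ≥ 2 and let a, b_1, …, b_i ∈ k with a ≠ 0. Set s = a·x + b_1·y_1 + ⋯ + b_i·y_i and t = a·x − b_1·y_1 − ⋯ − b_i·y_i in S_i. Then ann_{S_i}(s) is the principal ideal generated by t and ann_{S_i}(t) is the principal ideal generated by s; that is, s and t form an exact pair of zerodivisors in S_i. -/

import Mathlib

set_option synthInstance.maxHeartbeats 1000000
set_option maxHeartbeats 1000000

open MvPolynomial

noncomputable section

/-- The defining ideal `(X², (Y₁,…,Y_i)²)` of `S_i` in `k[X,Y₁,…,Y_i]`;
the variable `X 0` plays the role of `X` and `X j.succ` the role of `Y_j`. -/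
abbrev SIdeal (k : Type) [Field k] (i : ℕ) : Ideal (MvPolynomial (Fin (i + 1)) k) :=
  Ideal.span ({X 0 ^ 2} ∪ {p | ∃ a b : Fin i, p = X a.succ * X b.succ})

/-- `S_i = k[X,Y₁,…,Y_i]/(X², (Y₁,…,Y_i)²)`. -/
abbrev Sring (k : Type) [Field k] (i : ℕ) := MvPolynomial (Fin (i + 1)) k ⧸ SIdeal k i

/-- `x`, the residue class of `X` in `S_i`. -/
abbrev xS (k : Type) [Field k] (i : ℕ) : Sring k i := Ideal.Quotient.mk _ (X 0)

/-- `y_j`, the residue class of `Y_j` in `S_i`. -/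
abbrev yS (k : Type) [Field k] (i : ℕ) (j : Fin i) : Sring k i :=
  Ideal.Quotient.mk _ (X j.succ)

/-- The maximal ideal `𝔫_i = (x, y₁, …, y_i)` of `S_i`. -/
abbrev nS (k : Type) [Field k] (i : ℕ) : Ideal (Sring k i) :=
  Ideal.span ({xS k i} ∪ Set.range (yS k i))

variable {k : Type} [Field k] {i : ℕ}

def Good (i : ℕ) (d : Fin (i+1) →₀ ℕ) : Prop := d 0 ≤ 1 ∧ ∑ j : Fin i, d j.succ ≤ 1

lemma good_mono {d e : Fin (i+1) →₀ ℕ} (h : e ≤ d) (hd : Good i d) : Good i e :=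
  ⟨le_trans (h 0) hd.1, le_trans (Finset.sum_le_sum fun j _ => h j.succ) hd.2⟩

lemma sum_single_succ (u : Fin i) (n : ℕ) :
    ∑ j : Fin i, (Finsupp.single u.succ n) j.succ = n := by
  rw [Finset.sum_eq_single u]
  · simp
  · intro j _ hj
    rw [Finsupp.single_apply, if_neg]
    exact fun h => hj (Fin.succ_inj.mp h).symm
  · simp

lemma coeff_zero_of_mem {p : MvPolynomial (Fin (i+1)) k} (hp : p ∈ SIdeal k i)
    {d : Fin (i+1) →₀ ℕ} (hd : Good i d) : coeff d p = 0 := by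
  have H : ∀ d : Fin (i+1) →₀ ℕ, Good i d → coeff d p = 0 := by
    refine Submodule.span_induction
      (p := fun q _ => ∀ d : Fin (i+1) →₀ ℕ, Good i d → coeff d q = 0) ?_ ?_ ?_ ?_ hp
    · rintro q (hq | ⟨u, v, rfl⟩) d hd
      · rw [Set.mem_singleton_iff] at hq
        subst hq
        rw [X_pow_eq_monomial, coeff_monomial]
        split
        · next h =>
          exfalso
          have := hd.1
          rw [← h] at this
          simp [Finsupp.single_apply] at this
        · rfl
      · rw [show (X u.succ * X v.succ : MvPolynomial (Fin (i+1)) k)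
            = monomial (Finsupp.single u.succ 1 + Finsupp.single v.succ 1) 1 by
            simp [X, monomial_mul], coeff_monomial]
        split
        · next h =>
          exfalso
          have h2 := hd.2
          rw [← h] at h2
          set m : Fin (i+1) →₀ ℕ := Finsupp.single u.succ 1 + Finsupp.single v.succ 1 with hm
          have : ∑ j : Fin i, m j.succ = (2 : ℕ) := by
            simp only [hm, Finsupp.add_apply, Finset.sum_add_distrib, sum_single_succ]
          omega
        · rfl
    · intro d hd
      simp
    · intro q r _ _ hq hr d hd
      rw [coeff_add, hq d hd, hr d hd, add_zero]
    · intro r q _ hq d hd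
      rw [smul_eq_mul, coeff_mul]
      refine Finset.sum_eq_zero fun z hz => ?_
      rw [Finset.HasAntidiagonal.mem_antidiagonal] at hz
      rw [hq z.2 (good_mono (hz ▸ le_add_self) hd), mul_zero]
  exact H d hd

lemma xx : xS k i * xS k i = 0 := by
  rw [← map_mul, Ideal.Quotient.eq_zero_iff_mem]
  exact Ideal.subset_span (Or.inl (by rw [Set.mem_singleton_iff]; ring))

lemma yy (a b : Fin i) : yS k i a * yS k i b = 0 := by
  rw [← map_mul, Ideal.Quotient.eq_zero_iff_mem]
  exact Ideal.subset_span (Or.inr ⟨a, b, rfl⟩)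

lemma sum_single_mul (j : Fin i) (c : k) (g : Fin i → Sring k i) :
    ∑ l, algebraMap k (Sring k i) ((Pi.single j c : Fin i → k) l) * g l
      = algebraMap k (Sring k i) c * g j := by
  rw [Finset.sum_eq_single j]
  · simp
  · intro l _ hl
    rw [Pi.single_apply, if_neg hl]
    simp
  · simp

lemma span_rep (r : Sring k i) : ∃ (c d : k) (e f : Fin i → k),
    r = algebraMap k (Sring k i) c + algebraMap k (Sring k i) d * xS k i +
      (∑ j, algebraMap k (Sring k i) (e j) * yS k i j) +
      (∑ j, algebraMap k (Sring k i) (f j) * (xS k i * yS k i j)) := by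
  obtain ⟨p, rfl⟩ := Ideal.Quotient.mk_surjective r
  induction p using MvPolynomial.induction_on with
  | C c =>
    exact ⟨c, 0, 0, 0, by simp; rfl⟩
  | add p q hp hq =>
    obtain ⟨c, d, e, f, hp⟩ := hp
    obtain ⟨c', d', e', f', hq⟩ := hq
    refine ⟨c + c', d + d', e + e', f + f', ?_⟩
    rw [RingHom.map_add, hp, hq]
    simp only [Pi.add_apply, map_add, add_mul, Finset.sum_add_distrib]
    ring
  | mul_X p n hp =>
    obtain ⟨c, d, e, f, hp⟩ := hp
    rw [RingHom.map_mul, hp]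
    rcases Fin.eq_zero_or_eq_succ n with rfl | ⟨j, rfl⟩
    · -- multiply by x
      refine ⟨0, c, 0, e, ?_⟩
      show _ * xS k i = _
      have : ∀ j : Fin i, (algebraMap k (Sring k i)) (e j) * yS k i j * xS k i
          = (algebraMap k (Sring k i)) (e j) * (xS k i * yS k i j) := by intro j; ring
      have h4 : ∀ j : Fin i, (algebraMap k (Sring k i)) (f j) * (xS k i * yS k i j) * xS k i
          = 0 := by
        intro j
        have : (algebraMap k (Sring k i)) (f j) * (xS k i * yS k i j) * xS k i
            = (algebraMap k (Sring k i)) (f j) * yS k i j * (xS k i * xS k i) := by ring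
        rw [this, xx, mul_zero]
      rw [add_mul, add_mul, add_mul, Finset.sum_mul, Finset.sum_mul]
      rw [Finset.sum_congr rfl fun j _ => this j, Finset.sum_congr rfl fun j _ => h4 j]
      have h2 : (algebraMap k (Sring k i)) d * xS k i * xS k i = 0 := by
        rw [mul_assoc, xx, mul_zero]
      rw [h2]
      simp
    · -- multiply by y j
      refine ⟨0, 0, Pi.single j c, Pi.single j d, ?_⟩
      show _ * yS k i j = _
      have h3 : ∀ l : Fin i, (algebraMap k (Sring k i)) (e l) * yS k i l * yS k i j = 0 := by
        intro l
        rw [mul_assoc, yy, mul_zero]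
      have h4 : ∀ l : Fin i, (algebraMap k (Sring k i)) (f l) * (xS k i * yS k i l) * yS k i j
          = 0 := by
        intro l
        have : (algebraMap k (Sring k i)) (f l) * (xS k i * yS k i l) * yS k i j
            = (algebraMap k (Sring k i)) (f l) * xS k i * (yS k i l * yS k i j) := by ring
        rw [this, yy, mul_zero]
      rw [add_mul, add_mul, add_mul, Finset.sum_mul, Finset.sum_mul]
      rw [Finset.sum_congr rfl fun l _ => h3 l, Finset.sum_congr rfl fun l _ => h4 l]
      rw [sum_single_mul, sum_single_mul]
      simp
      ring

lemma indep {α : k} {β γ : Fin i → k}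
    (h : algebraMap k (Sring k i) α * xS k i +
      (∑ j, algebraMap k (Sring k i) (β j) * yS k i j) +
      (∑ j, algebraMap k (Sring k i) (γ j) * (xS k i * yS k i j)) = 0) :
    α = 0 ∧ β = 0 ∧ γ = 0 := by
  set m0 : Fin (i+1) →₀ ℕ := Finsupp.single 0 1 with hm0
  set my : Fin i → (Fin (i+1) →₀ ℕ) := fun j => Finsupp.single j.succ 1 with hmy
  set mxy : Fin i → (Fin (i+1) →₀ ℕ) := fun j => Finsupp.single 0 1 + Finsupp.single j.succ 1
    with hmxy
  set P : MvPolynomial (Fin (i+1)) k :=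
    monomial m0 α + (∑ j, monomial (my j) (β j)) + (∑ j, monomial (mxy j) (γ j)) with hP
  have e0 : (monomial m0 α : MvPolynomial (Fin (i+1)) k) = C α * X 0 := by
    rw [hm0, X, C_mul_monomial, mul_one]
  have ey : ∀ j : Fin i, (monomial (my j) (β j) : MvPolynomial (Fin (i+1)) k)
      = C (β j) * X j.succ := by
    intro j
    simp only [hmy]
    rw [X, C_mul_monomial, mul_one]
  have exy : ∀ j : Fin i, (monomial (mxy j) (γ j) : MvPolynomial (Fin (i+1)) k)
      = C (γ j) * (X 0 * X j.succ) := by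
    intro j
    simp only [hmxy]
    rw [X, X, monomial_mul, C_mul_monomial, one_mul, mul_one]
  have hmkP : Ideal.Quotient.mk (SIdeal k i) P = 0 := by
    rw [← h, hP]
    rw [RingHom.map_add, RingHom.map_add, map_sum, map_sum]
    congr 1
    congr 1
    · rw [e0, RingHom.map_mul]
      rfl
    · refine Finset.sum_congr rfl fun j _ => ?_
      rw [ey j, RingHom.map_mul]
      rfl
    · refine Finset.sum_congr rfl fun j _ => ?_
      rw [exy j, RingHom.map_mul, RingHom.map_mul]
      rfl
  have hPmem : P ∈ SIdeal k i := Ideal.Quotient.eq_zero_iff_mem.mp hmkP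
  -- distinctness facts
  have hy0 : ∀ j : Fin i, my j ≠ m0 := by
    intro j h
    have := DFunLike.congr_fun h (0 : Fin (i+1))
    simp [hmy, hm0, Finsupp.single_apply, Fin.succ_ne_zero j] at this
  have hxy0 : ∀ j : Fin i, mxy j ≠ m0 := by
    intro j h
    have := DFunLike.congr_fun h (j.succ : Fin (i+1))
    simp [hmxy, hm0, Finsupp.single_apply, (Fin.succ_ne_zero j).symm] at this
  have h0y : ∀ j : Fin i, m0 ≠ my j := fun j h => hy0 j h.symm
  have hxyy : ∀ j l : Fin i, mxy j ≠ my l := by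
    intro j l h
    have := DFunLike.congr_fun h (0 : Fin (i+1))
    simp [hmxy, hmy, Finsupp.single_apply, Fin.succ_ne_zero j, Fin.succ_ne_zero l] at this
  have hyy : ∀ j l : Fin i, my j = my l → j = l := by
    intro j l h
    simp only [hmy] at h
    exact Fin.succ_injective _ (Finsupp.single_left_injective one_ne_zero h)
  have h0xy : ∀ j : Fin i, m0 ≠ mxy j := fun j h => hxy0 j h.symm
  have hyxy : ∀ j l : Fin i, my j ≠ mxy l := fun j l h => hxyy l j h.symm
  have hxyxy : ∀ j l : Fin i, mxy j = mxy l → j = l := by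
    intro j l h
    simp only [hmxy] at h
    exact Fin.succ_injective _ (Finsupp.single_left_injective one_ne_zero (add_left_cancel h))
  -- goodness
  have g0 : Good i m0 := by
    constructor
    · simp [hm0]
    · have : ∀ j : Fin i, m0 j.succ = 0 := by
        intro j
        rw [hm0, Finsupp.single_apply, if_neg (Fin.succ_ne_zero j).symm]
      simp [this]
  have gy : ∀ j : Fin i, Good i (my j) := by
    intro j
    constructor
    · rw [hmy]; simp [Finsupp.single_apply, Fin.succ_ne_zero j]
    · rw [hmy]; rw [sum_single_succ]
  have gxy : ∀ j : Fin i, Good i (mxy j) := by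
    intro j
    constructor
    · rw [hmxy]; simp [Finsupp.single_apply, Fin.succ_ne_zero j]
    · rw [hmxy]
      simp only [Finsupp.add_apply, Finset.sum_add_distrib, sum_single_succ]
      have : ∀ l : Fin i, (Finsupp.single (0 : Fin (i+1)) 1) l.succ = 0 := by
        intro l
        rw [Finsupp.single_apply, if_neg (Fin.succ_ne_zero l).symm]
      simp [this]
  -- coefficients of P
  have cP : ∀ d, coeff d P = (if m0 = d then α else 0) +
      (∑ j, if my j = d then β j else 0) + (∑ j, if mxy j = d then γ j else 0) := by
    intro d
    rw [hP, coeff_add, coeff_add, coeff_monomial, coeff_sum, coeff_sum]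
    congr 1
    congr 1
    · exact Finset.sum_congr rfl fun j _ => coeff_monomial _ _ _
    · exact Finset.sum_congr rfl fun j _ => coeff_monomial _ _ _
  have hα : α = 0 := by
    have := coeff_zero_of_mem hPmem g0
    rw [cP m0, if_pos rfl] at this
    rw [Finset.sum_eq_zero (fun j _ => if_neg (hy0 j)),
      Finset.sum_eq_zero (fun j _ => if_neg (hxy0 j))] at this
    simpa using this
  have hβ : ∀ j, β j = 0 := by
    intro j
    have := coeff_zero_of_mem hPmem (gy j)
    rw [cP (my j), if_neg (h0y j),
      Finset.sum_eq_zero (fun l _ => if_neg (hxyy l j))] at this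
    rw [Finset.sum_eq_single j] at this
    · rw [if_pos rfl] at this; simpa using this
    · intro l _ hl
      rw [if_neg]
      exact fun hh => hl (hyy l j hh)
    · simp
  have hγ : ∀ j, γ j = 0 := by
    intro j
    have := coeff_zero_of_mem hPmem (gxy j)
    rw [cP (mxy j), if_neg (h0xy j),
      Finset.sum_eq_zero (fun l _ => if_neg (hyxy l j))] at this
    rw [Finset.sum_eq_single j] at this
    · rw [if_pos rfl] at this; simpa using this
    · intro l _ hl
      rw [if_neg]
      exact fun hh => hl (hxyxy l j hh)
    · simp
  exact ⟨hα, funext hβ, funext hγ⟩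

lemma sum_y_mul_sum_y (u v : Fin i → k) :
    (∑ j, algebraMap k (Sring k i) (u j) * yS k i j) *
    (∑ l, algebraMap k (Sring k i) (v l) * yS k i l) = 0 := by
  rw [Finset.sum_mul_sum]
  refine Finset.sum_eq_zero fun j _ => Finset.sum_eq_zero fun l _ => ?_
  have : (algebraMap k (Sring k i)) (u j) * yS k i j * ((algebraMap k (Sring k i)) (v l) * yS k i l)
      = (algebraMap k (Sring k i)) (u j) * (algebraMap k (Sring k i)) (v l) * (yS k i j * yS k i l) := by
    ring
  rw [this, yy, mul_zero]

lemma mul_form (c d a : k) (e f b : Fin i → k) :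
    (algebraMap k (Sring k i) c + algebraMap k (Sring k i) d * xS k i +
      (∑ j, algebraMap k (Sring k i) (e j) * yS k i j) +
      (∑ j, algebraMap k (Sring k i) (f j) * (xS k i * yS k i j))) *
    (algebraMap k (Sring k i) a * xS k i +
      ∑ j, algebraMap k (Sring k i) (b j) * yS k i j)
    = algebraMap k (Sring k i) (c * a) * xS k i +
      (∑ j, algebraMap k (Sring k i) (c * b j) * yS k i j) +
      (∑ j, algebraMap k (Sring k i) (d * b j + a * e j) * (xS k i * yS k i j)) := by
  set A := algebraMap k (Sring k i) with hA
  rw [add_mul, add_mul, add_mul]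
  have t1 : A c * (A a * xS k i + ∑ j, A (b j) * yS k i j)
      = A (c * a) * xS k i + ∑ j, A (c * b j) * yS k i j := by
    rw [mul_add, Finset.mul_sum]
    congr 1
    · rw [map_mul]; ring
    · refine Finset.sum_congr rfl fun j _ => ?_
      rw [map_mul]; ring
  have t2 : A d * xS k i * (A a * xS k i + ∑ j, A (b j) * yS k i j)
      = ∑ j, A (d * b j) * (xS k i * yS k i j) := by
    rw [mul_add]
    have h1 : A d * xS k i * (A a * xS k i) = A d * A a * (xS k i * xS k i) := by ring
    rw [h1, xx, mul_zero, zero_add, Finset.mul_sum]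
    refine Finset.sum_congr rfl fun j _ => ?_
    rw [map_mul]
    ring
  have t3 : (∑ j, A (e j) * yS k i j) * (A a * xS k i + ∑ j, A (b j) * yS k i j)
      = ∑ j, A (a * e j) * (xS k i * yS k i j) := by
    rw [mul_add, sum_y_mul_sum_y, add_zero, Finset.sum_mul]
    refine Finset.sum_congr rfl fun j _ => ?_
    rw [map_mul]
    ring
  have t4 : (∑ j, A (f j) * (xS k i * yS k i j)) * (A a * xS k i + ∑ j, A (b j) * yS k i j)
      = 0 := by
    rw [mul_add]
    have h1 : (∑ j, A (f j) * (xS k i * yS k i j)) * (A a * xS k i) = 0 := by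
      rw [Finset.sum_mul]
      refine Finset.sum_eq_zero fun j _ => ?_
      have : A (f j) * (xS k i * yS k i j) * (A a * xS k i)
          = A (f j) * A a * yS k i j * (xS k i * xS k i) := by ring
      rw [this, xx, mul_zero]
    have h2 : (∑ j, A (f j) * (xS k i * yS k i j)) * (∑ j, A (b j) * yS k i j) = 0 := by
      rw [Finset.sum_mul]
      refine Finset.sum_eq_zero fun j _ => ?_
      rw [Finset.mul_sum]
      refine Finset.sum_eq_zero fun l _ => ?_
      have : A (f j) * (xS k i * yS k i j) * (A (b l) * yS k i l)
          = A (f j) * A (b l) * xS k i * (yS k i j * yS k i l) := by ring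
      rw [this, yy, mul_zero]
    rw [h1, h2, add_zero]
  rw [t1, t2, t3, t4, add_zero, add_assoc]
  congr 1
  rw [← Finset.sum_add_distrib]
  refine Finset.sum_congr rfl fun j _ => ?_
  rw [map_add, add_mul]

lemma key (a : k) (b : Fin i → k) (ha : a ≠ 0) :
    {r : Sring k i | r * (algebraMap k (Sring k i) a * xS k i +
      ∑ j, algebraMap k (Sring k i) (b j) * yS k i j) = 0} =
    ↑(Ideal.span {algebraMap k (Sring k i) a * xS k i +
      ∑ j, algebraMap k (Sring k i) (-(b j)) * yS k i j}) := by
  set A := algebraMap k (Sring k i) with hA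
  set s : Sring k i := A a * xS k i + ∑ j, A (b j) * yS k i j with hs
  set t : Sring k i := A a * xS k i + ∑ j, A (-(b j)) * yS k i j with ht
  have hts : t * s = 0 := by
    have ht' : t = A 0 + A a * xS k i + (∑ j, A (-(b j)) * yS k i j) +
        (∑ j, A 0 * (xS k i * yS k i j)) := by
      rw [ht]; simp
    rw [ht', hs, mul_form]
    simp
  ext r
  simp only [Set.mem_setOf_eq, SetLike.mem_coe]
  constructor
  · intro hrs
    obtain ⟨c, d, e, f, rfl⟩ := span_rep r
    rw [hs, mul_form] at hrs
    obtain ⟨h1, h2, h3⟩ := indep hrs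
    have hc : c = 0 := by
      rcases mul_eq_zero.mp h1 with h | h
      · exact h
      · exact absurd h ha
    have he : ∀ j, e j = (d / a) * (-(b j)) := by
      intro j
      have h3j : d * b j + a * e j = 0 := congrFun h3 j
      field_simp
      linear_combination h3j
    rw [Ideal.mem_span_singleton']
    refine ⟨A (d / a) + A 0 * xS k i + (∑ j, A (f j / a) * yS k i j) +
      (∑ j, A 0 * (xS k i * yS k i j)), ?_⟩
    rw [ht, mul_form, hc]
    have c1 : d / a * a = d := div_mul_cancel₀ d ha
    have c2 : ∀ j : Fin i, 0 * -(b j) + a * (f j / a) = f j := by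
      intro j
      field_simp
      ring
    rw [c1]
    have s1 : (∑ j, A (d / a * -(b j)) * yS k i j) = ∑ j, A (e j) * yS k i j :=
      Finset.sum_congr rfl fun j _ => by rw [← he j]
    have s2 : (∑ j, A (0 * -(b j) + a * (f j / a)) * (xS k i * yS k i j))
        = ∑ j, A (f j) * (xS k i * yS k i j) :=
      Finset.sum_congr rfl fun j _ => by rw [c2 j]
    rw [s1, s2]
    simp
    rfl
  · intro hmem
    obtain ⟨u, rfl⟩ := Ideal.mem_span_singleton'.mp hmem
    rw [mul_assoc, hts, mul_zero]

/-- For `i ≥ 2`, `a, b₁, …, b_i ∈ k` with `a ≠ 0`, the elements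
`s = a·x + Σ b_j·y_j` and `t = a·x − Σ b_j·y_j` of `S_i` form an exact pair of zerodivisors:
`ann(s) = (t)` and `ann(t) = (s)`. -/
theorem stmt2 (k : Type) [Field k] [CharZero k] (i : ℕ) (hi : 2 ≤ i)
    (a : k) (b : Fin i → k) (ha : a ≠ 0) (s t : Sring k i)
    (hs : s = algebraMap k (Sring k i) a * xS k i +
      ∑ j, algebraMap k (Sring k i) (b j) * yS k i j)
    (ht : t = algebraMap k (Sring k i) a * xS k i -
      ∑ j, algebraMap k (Sring k i) (b j) * yS k i j) :
    {r : Sring k i | r * s = 0} = ↑(Ideal.span {t}) ∧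
    {r : Sring k i | r * t = 0} = ↑(Ideal.span {s}) := by
  have ht' : t = algebraMap k (Sring k i) a * xS k i +
      ∑ j, algebraMap k (Sring k i) (-(b j)) * yS k i j := by
    rw [ht, sub_eq_add_neg, ← Finset.sum_neg_distrib]
    rw [Finset.sum_congr rfl (fun j _ => by rw [map_neg]; exact (neg_mul ((algebraMap k (Sring k i)) (b j)) (yS k i j)).symm : ∀ j ∈ Finset.univ, -((algebraMap k (Sring k i)) (b j) * yS k i j) = (algebraMap k (Sring k i)) (-(b j)) * yS k i j)]
  constructor
  · rw [hs, ht']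
    exact key a b ha
  · rw [ht', hs]
    have := key a (fun j => -(b j)) ha
    simpa using this
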